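/- Let f, g : ℝ₊ → ℝ₊ with f nondecreasing, and let θₙ, θ be nonnegative measurable functions on a finite measure space Q such that θₙ → θ a.e., f is continuous, and |fₙ(s) − f(s)| ≤ M·χ_{s < εₙ} for a sequence εₙ → 0 and a constant M (i.e., fₙ agrees with f for arguments ≥ εₙ and the discrepancy is uniformly bounded). If moreover μ({θₙ < εₙ}) → 0, then ∫_Q |fₙ(θₙ) − f(θ)| dμ → 0 provided f is bounded on bounded sets and the family f(θₙ) is uniformly integrable. -/

import Mathlib

open MeasureTheory Filter
open scoped ENNReal NNReal

/-- If `fₙ` agrees with a continuous `f` above a cut-off `εₙ → 0` with a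
uniformly bounded discrepancy, `θₙ → θ` a.e., the measure of `{θₙ < εₙ}`
tends to zero, `f` is bounded on bounded sets and the family `f(θₙ)` is
uniformly integrable, then `∫ |fₙ(θₙ) - f(θ)| → 0`. -/
theorem stmt19 {Q : Type*} [MeasurableSpace Q] (μ : Measure Q) [IsFiniteMeasure μ]
    (f : ℝ → ℝ) (fn : ℕ → ℝ → ℝ) (εn : ℕ → ℝ) (M : ℝ)
    (θn : ℕ → Q → ℝ) (θ : Q → ℝ)
    (hθn : ∀ n x, 0 ≤ θn n x) (hθ : ∀ x, 0 ≤ θ x)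
    (hθnmeas : ∀ n, Measurable (θn n)) (hθmeas : Measurable θ)
    (hf : Continuous f)
    (hfb : ∀ R : ℝ, ∃ B : ℝ, ∀ s : ℝ, |s| ≤ R → |f s| ≤ B)
    (hfn : ∀ n s, |fn n s - f s| ≤ if s < εn n then M else 0)
    (hεn : Tendsto εn atTop (nhds 0))
    (hae : ∀ᵐ x ∂μ, Tendsto (fun n => θn n x) atTop (nhds (θ x)))
    (hbad : Tendsto (fun n => μ {x | θn n x < εn n}) atTop (nhds 0))
    (hui : UniformIntegrable (fun n x => f (θn n x)) 1 μ) :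
    Tendsto (fun n => ∫ x, |fn n (θn n x) - f (θ x)| ∂μ) atTop (nhds 0) := by
  set F : ℕ → Q → ℝ := fun n x => f (θn n x) with hF
  set G : Q → ℝ := fun x => f (θ x) with hG
  have hFmeas : ∀ n, Measurable (F n) := fun n => hf.measurable.comp (hθnmeas n)
  have hGmeas : Measurable G := hf.measurable.comp hθmeas
  have haeFG : ∀ᵐ x ∂μ, Tendsto (fun n => F n x) atTop (nhds (G x)) := by
    filter_upwards [hae] with x hx
    exact (hf.tendsto (θ x)).comp hx
  -- G is in L¹ by Fatou
  obtain ⟨C, hC⟩ := hui.2.2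
  have hG1 : MemLp G 1 μ := by
    refine ⟨hGmeas.aestronglyMeasurable, ?_⟩
    rw [eLpNorm_one_eq_lintegral_enorm]
    have h1 : ∫⁻ x, (‖G x‖₊ : ℝ≥0∞) ∂μ
        = ∫⁻ x, liminf (fun n => (‖F n x‖₊ : ℝ≥0∞)) atTop ∂μ := by
      refine lintegral_congr_ae ?_
      filter_upwards [haeFG] with x hx
      exact ((ENNReal.continuous_coe.tendsto _).comp
        ((continuous_nnnorm.tendsto (G x)).comp hx)).liminf_eq.symm
    have h2 : ∫⁻ x, liminf (fun n => (‖F n x‖₊ : ℝ≥0∞)) atTop ∂μ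
        ≤ liminf (fun n => ∫⁻ x, (‖F n x‖₊ : ℝ≥0∞) ∂μ) atTop :=
      lintegral_liminf_le fun n => (hFmeas n).enorm
    have h3 : liminf (fun n => ∫⁻ x, (‖F n x‖₊ : ℝ≥0∞) ∂μ) atTop ≤ (C : ℝ≥0∞) := by
      refine liminf_le_of_le (by isBoundedDefault) ?_
      intro b hb
      obtain ⟨n, hn⟩ := hb.exists
      refine hn.trans ?_
      have := hC n
      rwa [eLpNorm_one_eq_lintegral_enorm] at this
    calc ∫⁻ x, (‖G x‖₊ : ℝ≥0∞) ∂μ ≤ (C : ℝ≥0∞) := by rw [h1]; exact h2.trans h3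
      _ < ∞ := ENNReal.coe_lt_top
  -- Vitali: F n → G in L¹
  have hLp : Tendsto (fun n => eLpNorm (F n - G) 1 μ) atTop (nhds 0) :=
    tendsto_Lp_finite_of_tendsto_ae le_rfl ENNReal.one_ne_top
      (fun n => (hFmeas n).aestronglyMeasurable) hG1 hui.2.1 haeFG
  have hFint : ∀ n, Integrable (F n) μ := fun n => memLp_one_iff_integrable.mp (hui.memLp n)
  have hGint : Integrable G μ := memLp_one_iff_integrable.mp hG1
  have hFGint : ∀ n, Integrable (fun x => |F n x - G x|) μ :=
    fun n => ((hFint n).sub hGint).abs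
  have hL1 : Tendsto (fun n => ∫ x, |F n x - G x| ∂μ) atTop (nhds 0) := by
    have heq : ∀ n, ∫ x, |F n x - G x| ∂μ = (eLpNorm (F n - G) 1 μ).toReal := by
      intro n
      rw [eLpNorm_one_eq_lintegral_enorm]
      rw [integral_eq_lintegral_of_nonneg_ae (Filter.Eventually.of_forall fun x => abs_nonneg _)
        ((hFGint n).aestronglyMeasurable)]
      congr 1
      refine lintegral_congr fun x => ?_
      rw [← Real.norm_eq_abs, ofReal_norm]
      rfl
    simp_rw [heq]
    exact (ENNReal.tendsto_toReal (by simp)).comp hLp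
  set M' : ℝ := max M 0 with hM'
  set s : ℕ → Set Q := fun n => {x | θn n x < εn n} with hs
  have hsmeas : ∀ n, MeasurableSet (s n) :=
    fun n => measurableSet_lt (hθnmeas n) measurable_const
  set g : ℕ → Q → ℝ := fun n x => (s n).indicator (fun _ => M') x + |F n x - G x| with hg
  have hgint : ∀ n, Integrable (g n) μ :=
    fun n => ((integrable_const M').indicator (hsmeas n)).add (hFGint n)
  have hpt : ∀ n x, |fn n (θn n x) - f (θ x)| ≤ g n x := by
    intro n x
    have h1 : |fn n (θn n x) - f (θ x)|
        ≤ |fn n (θn n x) - F n x| + |F n x - G x| := abs_sub_le _ _ _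
    refine h1.trans (add_le_add_left ?_ _)
    refine (hfn n (θn n x)).trans ?_
    by_cases hx : θn n x < εn n
    · rw [if_pos hx, Set.indicator_of_mem (show x ∈ s n from hx) (fun _ => M')]
      exact le_max_left _ _
    · rw [if_neg hx, Set.indicator_of_notMem (show x ∉ s n from hx) (fun _ => M')]
  have hgto : Tendsto (fun n => ∫ x, g n x ∂μ) atTop (nhds 0) := by
    have h1 : ∀ n, ∫ x, g n x ∂μ = (μ (s n)).toReal * M' + ∫ x, |F n x - G x| ∂μ := by
      intro n
      rw [hg]
      rw [integral_add ((integrable_const M').indicator (hsmeas n)) (hFGint n),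
        integral_indicator_const _ (hsmeas n), smul_eq_mul]
      rfl
    simp_rw [h1]
    have h2 : Tendsto (fun n => (μ (s n)).toReal * M') atTop (nhds 0) := by
      have : Tendsto (fun n => (μ (s n)).toReal) atTop (nhds 0) :=
        (ENNReal.tendsto_toReal (by simp)).comp hbad
      simpa using this.mul_const M'
    simpa using h2.add hL1
  refine squeeze_zero (fun n => integral_nonneg fun x => abs_nonneg _) (fun n => ?_) hgto
  exact integral_mono_of_nonneg (Filter.Eventually.of_forall fun x => abs_nonneg _)
    (hgint n) (Filter.Eventually.of_forall fun x => hpt n x)
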